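/- If G and H are connected graphs, then b(G □ H) ≤ min{b(G) + rad(H), b(H) + rad(G)}. -/

import Mathlib

open SimpleGraph

/-- The set of vertices burned after `t` rounds of the burning process on `G`,
where `s i` is the source of fire chosen in round `i + 1`. -/
def burnSet {V : Type*} (G : SimpleGraph V) (s : ℕ → V) : ℕ → Set V
  | 0 => ∅
  | t + 1 => burnSet G s t ∪ {w | ∃ u ∈ burnSet G s t, G.Adj u w} ∪ {s t}

/-- The partial burning number `b(G, S)`: the least number of rounds needed to
burn every vertex of `S`. -/
noncomputable def pburn {V : Type*} (G : SimpleGraph V) (S : Set V) : ℕ :=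
  sInf {r | ∃ s : ℕ → V, S ⊆ burnSet G s r}

/-- The burning number `b(G)`. -/
noncomputable def burn {V : Type*} (G : SimpleGraph V) : ℕ :=
  pburn G Set.univ

/-- The ball of radius `t` around `v` in graph distance. -/
def gball {V : Type*} (G : SimpleGraph V) (v : V) (t : ℕ) : Set V :=
  {w | G.dist v w ≤ t}

/-- The `m × n` Cartesian grid `P_m □ P_n`; the first coordinate is the height (row). -/
def gridGraph (m n : ℕ) : SimpleGraph (Fin m × Fin n) :=
  (pathGraph m) □ (pathGraph n)

/-- The radius of a graph: the least `r` such that some vertex has every vertex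
within distance `r` of it. -/
noncomputable def grad {V : Type*} (G : SimpleGraph V) : ℕ :=
  sInf {r | ∃ v : V, ∀ w : V, G.dist v w ≤ r}

lemma burnSet_mono {V : Type*} (G : SimpleGraph V) (s : ℕ → V) {t t' : ℕ} (h : t ≤ t') :
    burnSet G s t ⊆ burnSet G s t' := by
  induction h with
  | refl => exact le_refl _
  | step h ih => exact ih.trans (by intro x hx; exact Or.inl (Or.inl hx))

lemma source_mem_burnSet {V : Type*} (G : SimpleGraph V) (s : ℕ → V) (t : ℕ) :
    s t ∈ burnSet G s (t + 1) := Or.inr rfl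

lemma walk_spread {V : Type*} (G : SimpleGraph V) (s : ℕ → V) {u w : V} {t : ℕ}
    (hu : u ∈ burnSet G s t) (p : G.Walk u w) : w ∈ burnSet G s (t + p.length) := by
  induction p generalizing t with
  | nil => simpa using hu
  | @cons a b c hab q ih =>
      have hb : b ∈ burnSet G s (t + 1) := Or.inl (Or.inr ⟨a, hu, hab⟩)
      have h2 := ih hb
      have he : t + (Walk.cons hab q).length = (t + 1) + q.length := by
        rw [Walk.length_cons]; omega
      rw [he]; exact h2

lemma lift_burnSet {V W : Type*} (G : SimpleGraph V) (H : SimpleGraph W) (s : ℕ → V) (c : W)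
    {u : V} {t : ℕ} (hu : u ∈ burnSet G s t) :
    (u, c) ∈ burnSet (G □ H) (fun i => (s i, c)) t := by
  induction t generalizing u with
  | zero => exact absurd hu (by simp [burnSet])
  | succ t ih =>
      rcases hu with ((h | ⟨x, hx, hadj⟩) | h)
      · exact Or.inl (Or.inl (ih h))
      · exact Or.inl (Or.inr ⟨(x, c), ih hx, Or.inl ⟨hadj, rfl⟩⟩)
      · exact Or.inr (by simp_all)

lemma swap_burnSet {V W : Type*} (G : SimpleGraph V) (H : SimpleGraph W) (s : ℕ → W × V)
    {x : W × V} {t : ℕ} (hx : x ∈ burnSet (H □ G) s t) :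
    x.swap ∈ burnSet (G □ H) (fun i => (s i).swap) t := by
  induction t generalizing x with
  | zero => exact absurd hx (by simp [burnSet])
  | succ t ih =>
      rcases hx with ((h | ⟨y, hy, hadj⟩) | h)
      · exact Or.inl (Or.inl (ih h))
      · refine Or.inl (Or.inr ⟨y.swap, ih hy, ?_⟩)
        rcases hadj with ⟨ha, he⟩ | ⟨ha, he⟩
        · exact Or.inr ⟨ha, he⟩
        · exact Or.inl ⟨ha, he⟩
      · exact Or.inr (by simp_all)

lemma burn_spec {V : Type*} [Fintype V] [Nonempty V] (G : SimpleGraph V) :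
    ∃ s : ℕ → V, Set.univ ⊆ burnSet G s (burn G) := by
  have hne : {r | ∃ s : ℕ → V, Set.univ ⊆ burnSet G s r}.Nonempty := by
    classical
    have hn : 0 < Fintype.card V := Fintype.card_pos
    set e := Fintype.equivFin V with he
    set f : ℕ → V := fun i => e.symm ⟨i % Fintype.card V, Nat.mod_lt _ hn⟩ with hf
    refine ⟨Fintype.card V, f, ?_⟩
    intro v _
    have hv : v ∈ burnSet G f ((e v : ℕ) + 1) := by
      have := source_mem_burnSet G f (e v : ℕ)
      simpa [hf, Nat.mod_eq_of_lt (e v).2] using this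
    exact burnSet_mono G f (Nat.succ_le_of_lt (e v).2) hv
  exact Nat.sInf_mem hne

lemma grad_spec {V : Type*} [Fintype V] [Nonempty V] (G : SimpleGraph V) :
    ∃ v : V, ∀ w : V, G.dist v w ≤ grad G := by
  have hne : {r | ∃ v : V, ∀ w : V, G.dist v w ≤ r}.Nonempty := by
    classical
    obtain ⟨v⟩ := ‹Nonempty V›
    exact ⟨Finset.univ.sup (fun w => G.dist v w), v,
      fun w => Finset.le_sup (Finset.mem_univ w)⟩
  exact Nat.sInf_mem hne

lemma key {V W : Type*} [Fintype V] [Fintype W] [Nonempty V] [Nonempty W]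
    (G : SimpleGraph V) (H : SimpleGraph W) (hH : H.Connected) :
    ∃ s : ℕ → V × W, Set.univ ⊆ burnSet (G □ H) s (burn G + grad H) := by
  obtain ⟨s, hs⟩ := burn_spec G
  obtain ⟨c, hc⟩ := grad_spec H
  refine ⟨fun i => (s i, c), ?_⟩
  rintro ⟨u, w⟩ -
  have hu : u ∈ burnSet G s (burn G) := hs (Set.mem_univ u)
  have h1 := lift_burnSet G H s c hu
  obtain ⟨p, hp⟩ := hH.exists_walk_length_eq_dist c w
  have h2 := walk_spread (G □ H) _ h1 (Walk.boxProdRight G u p)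
  have hlen : (Walk.boxProdRight G u p).length = H.dist c w := by
    exact (Walk.length_map _ _).trans hp
  rw [hlen] at h2
  exact burnSet_mono _ _ (by have := hc w; omega) h2

/-- For connected graphs `G` and `H`,
`b(G □ H) ≤ min (b(G) + rad(H)) (b(H) + rad(G))`. -/
theorem burn_boxProd_le {V W : Type*} [Fintype V] [Fintype W]
    (G : SimpleGraph V) (H : SimpleGraph W) (hG : G.Connected) (hH : H.Connected) :
    burn (G □ H) ≤ min (burn G + grad H) (burn H + grad G) := by
  have hV : Nonempty V := hG.nonempty
  have hW : Nonempty W := hH.nonempty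
  refine le_min ?_ ?_
  · obtain ⟨s, hs⟩ := key G H hH
    exact Nat.sInf_le ⟨s, hs⟩
  · obtain ⟨s, hs⟩ := key H G hG
    refine Nat.sInf_le ⟨fun i => (s i).swap, ?_⟩
    rintro ⟨u, w⟩ -
    have := swap_burnSet G H s (hs (Set.mem_univ (w, u)))
    simpa using this
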